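/- Consider a sequence of bid profiles b^0, ..., b^T generated by choosing at each step a bidder uniformly at random from n bidders and letting only that bidder change his bid. Then for every item j, E[max_{t ≤ T} max_i b^t_{i,j}] ≤ (1 − 1/n)^{−T} · E[max_i b^T_{i,j}]. -/

import Mathlib

open Finset

namespace Stmt14Aux

variable {k T m : ℕ}

/-- first time at which some bid exceeds `x`. -/
noncomputable def tstar (B : (Fin T → Fin (k+1)) → ℕ → Fin (k+1) → Fin m → ℝ)
    (j : Fin m) (x : ℝ) (σ : Fin T → Fin (k+1)) : ℕ := by
  classical exact if h : ∃ t, ∃ i, x < B σ t i j then Nat.find h else 0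

/-- least bidder whose bid at time `t` exceeds `x`. -/
noncomputable def istar (B : (Fin T → Fin (k+1)) → ℕ → Fin (k+1) → Fin m → ℝ)
    (j : Fin m) (x : ℝ) (σ : Fin T → Fin (k+1)) (t : ℕ) : Fin (k+1) := by
  classical exact
    if h : (Finset.univ.filter fun i => x < B σ t i j).Nonempty then
      (Finset.univ.filter fun i => x < B σ t i j).min' h else 0

noncomputable def glue (B : (Fin T → Fin (k+1)) → ℕ → Fin (k+1) → Fin m → ℝ)
    (j : Fin m) (x : ℝ) (σ : Fin T → Fin (k+1)) (τ : Fin T → Fin k) : Fin T → Fin (k+1) :=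
  fun s => if (s : ℕ) < tstar B j x σ then σ s
    else (istar B j x σ (tstar B j x σ)).succAbove (τ s)

noncomputable def rho (B : (Fin T → Fin (k+1)) → ℕ → Fin (k+1) → Fin m → ℝ)
    (j : Fin m) (x : ℝ) (σ : Fin T → Fin (k+1)) (τ : Fin T → Fin k) : Fin T → Fin (k+1) :=
  fun s => if (s : ℕ) < tstar B j x σ then (τ s).castSucc else σ s

lemma tstar_eq {B : (Fin T → Fin (k+1)) → ℕ → Fin (k+1) → Fin m → ℝ}
    {j : Fin m} {x : ℝ} {σ : Fin T → Fin (k+1)} {t : ℕ}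
    (h1 : ∃ i, x < B σ t i j) (h2 : ∀ s < t, ¬ ∃ i, x < B σ s i j) :
    tstar B j x σ = t := by
  classical
  have hex : ∃ t, ∃ i, x < B σ t i j := ⟨t, h1⟩
  rw [tstar]
  simp only [dif_pos hex]
  exact (Nat.find_eq_iff _).2 ⟨h1, h2⟩

lemma tstar_le {B : (Fin T → Fin (k+1)) → ℕ → Fin (k+1) → Fin m → ℝ}
    {j : Fin m} {x : ℝ} {σ : Fin T → Fin (k+1)} {t : ℕ}
    (h : ∃ i, x < B σ t i j) : tstar B j x σ ≤ t := by
  classical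
  rw [tstar]
  simp only [dif_pos (⟨t, h⟩ : ∃ t, ∃ i, x < B σ t i j)]
  exact Nat.find_min' _ h

lemma tstar_hit {B : (Fin T → Fin (k+1)) → ℕ → Fin (k+1) → Fin m → ℝ}
    {j : Fin m} {x : ℝ} {σ : Fin T → Fin (k+1)}
    (hex : ∃ t, ∃ i, x < B σ t i j) : ∃ i, x < B σ (tstar B j x σ) i j := by
  classical
  rw [tstar]
  simp only [dif_pos hex]
  exact Nat.find_spec hex

lemma tstar_not {B : (Fin T → Fin (k+1)) → ℕ → Fin (k+1) → Fin m → ℝ}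
    {j : Fin m} {x : ℝ} {σ : Fin T → Fin (k+1)}
    (hex : ∃ t, ∃ i, x < B σ t i j) :
    ∀ s < tstar B j x σ, ¬ ∃ i, x < B σ s i j := by
  classical
  intro s hs
  rw [tstar] at hs
  simp only [dif_pos hex] at hs
  exact Nat.find_min hex hs

lemma istar_lt {B : (Fin T → Fin (k+1)) → ℕ → Fin (k+1) → Fin m → ℝ}
    {j : Fin m} {x : ℝ} {σ : Fin T → Fin (k+1)} {t : ℕ}
    (h : ∃ i, x < B σ t i j) : x < B σ t (istar B j x σ t) j := by
  classical
  obtain ⟨i, hi⟩ := h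
  have hne : (Finset.univ.filter fun i => x < B σ t i j).Nonempty :=
    ⟨i, Finset.mem_filter.2 ⟨Finset.mem_univ _, hi⟩⟩
  rw [istar]
  simp only [dif_pos hne]
  exact (Finset.mem_filter.1 (Finset.min'_mem _ hne)).2

lemma istar_congr {B : (Fin T → Fin (k+1)) → ℕ → Fin (k+1) → Fin m → ℝ}
    {j : Fin m} {x : ℝ} {σ σ' : Fin T → Fin (k+1)} {t t' : ℕ}
    (h : ∀ i, B σ t i j = B σ' t' i j) : istar B j x σ t = istar B j x σ' t' := by
  classical
  have hfun : (fun i => x < B σ t i j) = fun i => x < B σ' t' i j :=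
    funext fun i => by rw [h i]
  rw [istar, istar]
  simp only [hfun]

/-- the glued sequence: key properties. -/
lemma glue_main (B : (Fin T → Fin (k+1)) → ℕ → Fin (k+1) → Fin m → ℝ)
    (hupd : ∀ (σ : Fin T → Fin (k+1)) (t : Fin T) (i : Fin (k+1)), i ≠ σ t →
      ∀ j, B σ (t : ℕ) i j = B σ ((t : ℕ) + 1) i j)
    (hadapted : ∀ (σ σ' : Fin T → Fin (k+1)) (t : ℕ), t ≤ T →
      (∀ s : Fin T, (s : ℕ) < t → σ s = σ' s) → ∀ i j, B σ t i j = B σ' t i j)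
    (j : Fin m) (x : ℝ) (σ : Fin T → Fin (k+1)) (τ : Fin T → Fin k)
    (hσ : ∃ t ≤ T, ∃ i, x < B σ t i j) :
    tstar B j x (glue B j x σ τ) = tstar B j x σ ∧
    istar B j x (glue B j x σ τ) (tstar B j x σ) = istar B j x σ (tstar B j x σ) ∧
    (∃ i, x < B (glue B j x σ τ) T i j) := by
  classical
  obtain ⟨t1, ht1, hhit1⟩ := hσ
  have hex : ∃ t, ∃ i, x < B σ t i j := ⟨t1, hhit1⟩
  have htle : tstar B j x σ ≤ T := le_trans (tstar_le hhit1) ht1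
  have hhits := tstar_hit hex
  have hnot := tstar_not (j := j) (x := x) (σ := σ) hex
  set t0 := tstar B j x σ with ht0
  set σ' := glue B j x σ τ with hσ'
  have hagree : ∀ s : Fin T, (s : ℕ) < t0 → σ' s = σ s := by
    intro s hs
    rw [hσ', glue]
    simp only [← ht0, if_pos hs]
  have hBeq : ∀ t' ≤ t0, ∀ i, B σ' t' i j = B σ t' i j := fun t' ht' i =>
    hadapted σ' σ t' (ht'.trans htle) (fun s hs => hagree s (lt_of_lt_of_le hs ht')) i j
  have hhit' : ∃ i, x < B σ' t0 i j := by
    obtain ⟨i, hi⟩ := hhits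
    exact ⟨i, by rw [hBeq t0 le_rfl i]; exact hi⟩
  have hnot' : ∀ s < t0, ¬ ∃ i, x < B σ' s i j := by
    rintro s hs ⟨i, hi⟩
    exact hnot s hs ⟨i, by rw [← hBeq s hs.le i]; exact hi⟩
  have hts' : tstar B j x σ' = t0 := tstar_eq hhit' hnot'
  have hist' : istar B j x σ' t0 = istar B j x σ t0 :=
    istar_congr (fun i => hBeq t0 le_rfl i)
  refine ⟨hts', hist', ?_⟩
  have hconst : ∀ d, t0 + d ≤ T →
      B σ' (t0 + d) (istar B j x σ t0) j = B σ' t0 (istar B j x σ t0) j := by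
    intro d
    induction d with
    | zero => intro _; rfl
    | succ d ih =>
      intro hd
      have hdT : t0 + d < T := by omega
      have hσ's : σ' ⟨t0 + d, hdT⟩ = (istar B j x σ t0).succAbove (τ ⟨t0 + d, hdT⟩) := by
        rw [hσ', glue]
        simp only [← ht0]
        rw [if_neg (by simp)]
      have hne : istar B j x σ t0 ≠ σ' ⟨t0 + d, hdT⟩ := by
        rw [hσ's]
        exact (Fin.succAbove_ne _ _).symm
      have hstep := hupd σ' ⟨t0 + d, hdT⟩ (istar B j x σ t0) hne j
      have : (t0 + (d + 1)) = (t0 + d) + 1 := by omega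
      rw [this, ← hstep]
      exact ih (by omega)
  obtain ⟨d, hd⟩ : ∃ d, T = t0 + d := ⟨T - t0, by omega⟩
  refine ⟨istar B j x σ t0, ?_⟩
  have hcc := hconst d (by omega)
  rw [← hd] at hcc
  rw [hcc, hBeq t0 le_rfl]
  exact istar_lt hhits

theorem core (k m T : ℕ)
    (B : (Fin T → Fin (k+1)) → ℕ → Fin (k+1) → Fin m → ℝ)
    (hupd : ∀ (σ : Fin T → Fin (k+1)) (t : Fin T) (i : Fin (k+1)), i ≠ σ t →
      ∀ j, B σ (t : ℕ) i j = B σ ((t : ℕ) + 1) i j)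
    (hadapted : ∀ (σ σ' : Fin T → Fin (k+1)) (t : ℕ), t ≤ T →
      (∀ s : Fin T, (s : ℕ) < t → σ s = σ' s) → ∀ i j, B σ t i j = B σ' t i j)
    (j : Fin m) (x : ℝ) :
    Nat.card {σ : Fin T → Fin (k+1) // ∃ t ≤ T, ∃ i, x < B σ t i j} * k ^ T
      ≤ Nat.card {σ : Fin T → Fin (k+1) // ∃ i, x < B σ T i j} * (k+1) ^ T := by
  classical
  set Φ : {σ : Fin T → Fin (k+1) // ∃ t ≤ T, ∃ i, x < B σ t i j} × (Fin T → Fin k) →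
      {σ : Fin T → Fin (k+1) // ∃ i, x < B σ T i j} × (Fin T → Fin (k+1)) :=
    fun p => (⟨glue B j x p.1.1 p.2,
        (glue_main B hupd hadapted j x p.1.1 p.2 p.1.2).2.2⟩, rho B j x p.1.1 p.2) with hΦ
  have hinj : Function.Injective Φ := by
    rintro ⟨⟨σ₁, h₁⟩, τ₁⟩ ⟨⟨σ₂, h₂⟩, τ₂⟩ heq
    have hg : glue B j x σ₁ τ₁ = glue B j x σ₂ τ₂ :=
      congrArg (fun q => (q.1 : Fin T → Fin (k+1))) heq
    have hr : rho B j x σ₁ τ₁ = rho B j x σ₂ τ₂ := congrArg Prod.snd heq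
    obtain ⟨hts1, hist1, -⟩ := glue_main B hupd hadapted j x σ₁ τ₁ h₁
    obtain ⟨hts2, hist2, -⟩ := glue_main B hupd hadapted j x σ₂ τ₂ h₂
    have hts : tstar B j x σ₁ = tstar B j x σ₂ := by rw [← hts1, ← hts2, hg]
    have hist : istar B j x σ₁ (tstar B j x σ₁) = istar B j x σ₂ (tstar B j x σ₂) := by
      rw [← hist1, ← hist2, hg, hts]
    have hσeq : σ₁ = σ₂ := by
      funext s
      by_cases hs : (s : ℕ) < tstar B j x σ₁
      · have e1 := congrFun hg s
        rw [glue, glue] at e1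
        simp only [if_pos hs, if_pos (hts ▸ hs)] at e1
        exact e1
      · have e2 := congrFun hr s
        rw [rho, rho] at e2
        simp only [if_neg hs, if_neg (hts ▸ hs)] at e2
        exact e2
    have hτeq : τ₁ = τ₂ := by
      funext s
      by_cases hs : (s : ℕ) < tstar B j x σ₁
      · have e2 := congrFun hr s
        rw [rho, rho] at e2
        simp only [if_pos hs, if_pos (hts ▸ hs)] at e2
        exact Fin.castSucc_injective _ e2
      · have e1 := congrFun hg s
        rw [glue, glue] at e1
        simp only [if_neg hs, if_neg (hts ▸ hs)] at e1
        rw [← hist] at e1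
        exact Fin.succAbove_right_injective e1
    simp only [Prod.mk.injEq, Subtype.mk.injEq]
    exact ⟨hσeq, hτeq⟩
  have hcard1 : Nat.card ((Fin T → Fin k)) = k ^ T := by
    simp [Nat.card_eq_fintype_card]
  have hcard2 : Nat.card ((Fin T → Fin (k+1))) = (k+1) ^ T := by
    simp [Nat.card_eq_fintype_card]
  calc Nat.card {σ : Fin T → Fin (k+1) // ∃ t ≤ T, ∃ i, x < B σ t i j} * k ^ T
      = Nat.card ({σ : Fin T → Fin (k+1) // ∃ t ≤ T, ∃ i, x < B σ t i j} ×
          (Fin T → Fin k)) := by rw [Nat.card_prod, hcard1]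
    _ ≤ Nat.card ({σ : Fin T → Fin (k+1) // ∃ i, x < B σ T i j} ×
          (Fin T → Fin (k+1))) := Nat.card_le_card_of_injective Φ hinj
    _ = Nat.card {σ : Fin T → Fin (k+1) // ∃ i, x < B σ T i j} * (k+1) ^ T := by
        rw [Nat.card_prod, hcard2]

end Stmt14Aux

/-- Random activation: the activation sequence `σ : Fin T → Fin n` is drawn uniformly
(each of the `n^T` sequences with probability `n^{-T}`); the bid process `B σ` is adapted to
`σ` (the bids at time `t` depend only on the first `t` activations) and at step `t+1` only
the activated bidder `σ t` may change his bid. Then for every item `j`,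
`E[max_{t ≤ T} max_i b^t_{i,j}] ≤ (1 − 1/n)^{−T} · E[max_i b^T_{i,j}]`. -/
theorem stmt14 (n m T : ℕ) (hn : 2 ≤ n)
    (B : (Fin T → Fin n) → ℕ → Fin n → Fin m → ℝ)
    (hnonneg : ∀ σ t i j, 0 ≤ B σ t i j)
    -- only the chosen bidder changes his bid at each step
    (hupd : ∀ (σ : Fin T → Fin n) (t : Fin T) (k : Fin n), k ≠ σ t →
      ∀ j, B σ (t : ℕ) k j = B σ ((t : ℕ) + 1) k j)
    -- the process is adapted: bids at time `t` depend only on the activations before `t`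
    (hadapted : ∀ (σ σ' : Fin T → Fin n) (t : ℕ), t ≤ T →
      (∀ s : Fin T, (s : ℕ) < t → σ s = σ' s) → ∀ i j, B σ t i j = B σ' t i j) :
    ∀ j : Fin m,
      (1 / (n : ℝ) ^ T) * ∑ σ : Fin T → Fin n,
          ((Finset.univ.sup fun q : Fin (T + 1) × Fin n =>
            Real.toNNReal (B σ (q.1 : ℕ) q.2 j) : NNReal) : ℝ)
        ≤ ((1 - (n : ℝ)⁻¹) ^ T)⁻¹ * ((1 / (n : ℝ) ^ T) * ∑ σ : Fin T → Fin n,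
            ((Finset.univ.sup fun i : Fin n => Real.toNNReal (B σ T i j) : NNReal) : ℝ)) := by
  intro j
  obtain ⟨k, rfl⟩ : ∃ k, n = k + 1 := ⟨n - 1, by omega⟩
  have hk1 : 1 ≤ k := by omega
  classical
  open MeasureTheory in
  -- counting measure of a set is its Nat.card
  have hcount : ∀ s : Set (Fin T → Fin (k+1)),
      Measure.count s = (Nat.card s : ENNReal) := by
    intro s
    rw [Measure.count_apply_finite s (Set.toFinite s), Nat.card_coe_set_eq,
      Set.ncard_eq_toFinset_card s (Set.toFinite s)]
  -- level-set identifications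
  have hiffM : ∀ (t : ℝ), 0 ≤ t → ∀ σ : Fin T → Fin (k+1),
      (t < ((Finset.univ.sup fun q : Fin (T + 1) × Fin (k+1) =>
        Real.toNNReal (B σ (q.1 : ℕ) q.2 j) : NNReal) : ℝ)) ↔
      (∃ t' ≤ T, ∃ i, t < B σ t' i j) := by
    intro t ht σ
    rw [← Real.toNNReal_lt_iff_lt_coe ht, Finset.lt_sup_iff]
    constructor
    · rintro ⟨⟨t', i⟩, -, hq⟩
      have hb : 0 < B σ (t' : ℕ) i j :=
        Real.toNNReal_pos.1 (lt_of_le_of_lt zero_le hq)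
      exact ⟨(t' : ℕ), Nat.lt_succ_iff.1 t'.isLt, i,
        (Real.toNNReal_lt_toNNReal_iff hb).1 hq⟩
    · rintro ⟨t', ht', i, hbi⟩
      have hb : 0 < B σ t' i j := lt_of_le_of_lt ht hbi
      exact ⟨(⟨t', Nat.lt_succ_of_le ht'⟩, i), Finset.mem_univ _,
        (Real.toNNReal_lt_toNNReal_iff hb).2 hbi⟩
  have hiffG : ∀ (t : ℝ), 0 ≤ t → ∀ σ : Fin T → Fin (k+1),
      (t < ((Finset.univ.sup fun i : Fin (k+1) =>
        Real.toNNReal (B σ T i j) : NNReal) : ℝ)) ↔ (∃ i, t < B σ T i j) := by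
    intro t ht σ
    rw [← Real.toNNReal_lt_iff_lt_coe ht, Finset.lt_sup_iff]
    constructor
    · rintro ⟨i, -, hq⟩
      have hb : 0 < B σ T i j :=
        Real.toNNReal_pos.1 (lt_of_le_of_lt zero_le hq)
      exact ⟨i, (Real.toNNReal_lt_toNNReal_iff hb).1 hq⟩
    · rintro ⟨i, hbi⟩
      have hb : 0 < B σ T i j := lt_of_le_of_lt ht hbi
      exact ⟨i, Finset.mem_univ _, (Real.toNNReal_lt_toNNReal_iff hb).2 hbi⟩
  -- pointwise level inequality
  have pointwise : ∀ t : ℝ,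
      ((k : ℕ) : ENNReal) ^ T * Measure.count {σ : Fin T → Fin (k+1) |
          t < ((Finset.univ.sup fun q : Fin (T + 1) × Fin (k+1) =>
            Real.toNNReal (B σ (q.1 : ℕ) q.2 j) : NNReal) : ℝ)}
      ≤ (((k+1 : ℕ)) : ENNReal) ^ T * Measure.count {σ : Fin T → Fin (k+1) |
          t < ((Finset.univ.sup fun i : Fin (k+1) =>
            Real.toNNReal (B σ T i j) : NNReal) : ℝ)} := by
    intro t
    rcases lt_or_ge t 0 with ht | ht
    · have e1 : {σ : Fin T → Fin (k+1) |
          t < ((Finset.univ.sup fun q : Fin (T + 1) × Fin (k+1) =>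
            Real.toNNReal (B σ (q.1 : ℕ) q.2 j) : NNReal) : ℝ)} = Set.univ :=
        Set.eq_univ_of_forall fun σ => lt_of_lt_of_le ht (NNReal.coe_nonneg _)
      have e2 : {σ : Fin T → Fin (k+1) |
          t < ((Finset.univ.sup fun i : Fin (k+1) =>
            Real.toNNReal (B σ T i j) : NNReal) : ℝ)} = Set.univ :=
        Set.eq_univ_of_forall fun σ => lt_of_lt_of_le ht (NNReal.coe_nonneg _)
      rw [e1, e2]
      exact mul_le_mul_left (pow_le_pow_left' (Nat.cast_le.2 (Nat.le_succ k)) T) _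
    · have e1 : {σ : Fin T → Fin (k+1) |
          t < ((Finset.univ.sup fun q : Fin (T + 1) × Fin (k+1) =>
            Real.toNNReal (B σ (q.1 : ℕ) q.2 j) : NNReal) : ℝ)} =
          {σ : Fin T → Fin (k+1) | ∃ t' ≤ T, ∃ i, t < B σ t' i j} :=
        Set.ext fun σ => hiffM t ht σ
      have e2 : {σ : Fin T → Fin (k+1) |
          t < ((Finset.univ.sup fun i : Fin (k+1) =>
            Real.toNNReal (B σ T i j) : NNReal) : ℝ)} =
          {σ : Fin T → Fin (k+1) | ∃ i, t < B σ T i j} :=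
        Set.ext fun σ => hiffG t ht σ
      rw [e1, e2, hcount, hcount]
      simp only [Set.coe_setOf]
      have hc := Stmt14Aux.core k m T B hupd hadapted j t
      calc ((k : ℕ) : ENNReal) ^ T *
            (Nat.card {σ : Fin T → Fin (k+1) // ∃ t' ≤ T, ∃ i, t < B σ t' i j} : ENNReal)
          = ((Nat.card {σ : Fin T → Fin (k+1) // ∃ t' ≤ T, ∃ i, t < B σ t' i j} * k ^ T : ℕ) :
              ENNReal) := by push_cast; ring
        _ ≤ ((Nat.card {σ : Fin T → Fin (k+1) // ∃ i, t < B σ T i j} * (k+1) ^ T : ℕ) :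
              ENNReal) := by exact_mod_cast hc
        _ = (((k+1 : ℕ)) : ENNReal) ^ T *
            (Nat.card {σ : Fin T → Fin (k+1) // ∃ i, t < B σ T i j} : ENNReal) := by
              push_cast; ring
  -- layer cake for both sums
  have eqM : ∑ σ : Fin T → Fin (k+1),
      (((Finset.univ.sup fun q : Fin (T + 1) × Fin (k+1) =>
        Real.toNNReal (B σ (q.1 : ℕ) q.2 j) : NNReal)) : ENNReal)
      = ∫⁻ t in Set.Ioi (0:ℝ), Measure.count {σ : Fin T → Fin (k+1) |
          t < ((Finset.univ.sup fun q : Fin (T + 1) × Fin (k+1) =>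
            Real.toNNReal (B σ (q.1 : ℕ) q.2 j) : NNReal) : ℝ)} := by
    have h := lintegral_eq_lintegral_meas_lt (Measure.count)
      (f := fun σ : Fin T → Fin (k+1) =>
        ((Finset.univ.sup fun q : Fin (T + 1) × Fin (k+1) =>
          Real.toNNReal (B σ (q.1 : ℕ) q.2 j) : NNReal) : ℝ))
      (ae_of_all _ fun σ => NNReal.coe_nonneg _)
      ((measurable_of_countable _).aemeasurable)
    rw [lintegral_count, tsum_fintype] at h
    rw [← h]
    exact Finset.sum_congr rfl fun σ _ => (ENNReal.ofReal_coe_nnreal).symm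
  have eqG : ∑ σ : Fin T → Fin (k+1),
      (((Finset.univ.sup fun i : Fin (k+1) =>
        Real.toNNReal (B σ T i j) : NNReal)) : ENNReal)
      = ∫⁻ t in Set.Ioi (0:ℝ), Measure.count {σ : Fin T → Fin (k+1) |
          t < ((Finset.univ.sup fun i : Fin (k+1) =>
            Real.toNNReal (B σ T i j) : NNReal) : ℝ)} := by
    have h := lintegral_eq_lintegral_meas_lt (Measure.count)
      (f := fun σ : Fin T → Fin (k+1) =>
        ((Finset.univ.sup fun i : Fin (k+1) =>
          Real.toNNReal (B σ T i j) : NNReal) : ℝ))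
      (ae_of_all _ fun σ => NNReal.coe_nonneg _)
      ((measurable_of_countable _).aemeasurable)
    rw [lintegral_count, tsum_fintype] at h
    rw [← h]
    exact Finset.sum_congr rfl fun σ _ => (ENNReal.ofReal_coe_nnreal).symm
  have big : ((k : ℕ) : ENNReal) ^ T * ∑ σ : Fin T → Fin (k+1),
      (((Finset.univ.sup fun q : Fin (T + 1) × Fin (k+1) =>
        Real.toNNReal (B σ (q.1 : ℕ) q.2 j) : NNReal)) : ENNReal)
      ≤ (((k+1 : ℕ)) : ENNReal) ^ T * ∑ σ : Fin T → Fin (k+1),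
      (((Finset.univ.sup fun i : Fin (k+1) =>
        Real.toNNReal (B σ T i j) : NNReal)) : ENNReal) := by
    rw [eqM, eqG,
      ← lintegral_const_mul' _ _ (by exact ENNReal.pow_ne_top (ENNReal.natCast_ne_top k)),
      ← lintegral_const_mul' _ _ (by exact ENNReal.pow_ne_top (ENNReal.natCast_ne_top (k+1)))]
    exact lintegral_mono fun t => pointwise t
  have key2 : ((k : ℕ) : NNReal) ^ T * ∑ σ : Fin T → Fin (k+1),
      ((Finset.univ.sup fun q : Fin (T + 1) × Fin (k+1) =>
        Real.toNNReal (B σ (q.1 : ℕ) q.2 j) : NNReal))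
      ≤ (((k+1 : ℕ)) : NNReal) ^ T * ∑ σ : Fin T → Fin (k+1),
      ((Finset.univ.sup fun i : Fin (k+1) =>
        Real.toNNReal (B σ T i j) : NNReal)) := by
    exact_mod_cast big
  have key : ((k : ℕ) : ℝ) ^ T * ∑ σ : Fin T → Fin (k+1),
      (((Finset.univ.sup fun q : Fin (T + 1) × Fin (k+1) =>
        Real.toNNReal (B σ (q.1 : ℕ) q.2 j) : NNReal)) : ℝ)
      ≤ (((k+1 : ℕ)) : ℝ) ^ T * ∑ σ : Fin T → Fin (k+1),
      (((Finset.univ.sup fun i : Fin (k+1) =>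
        Real.toNNReal (B σ T i j) : NNReal)) : ℝ) := by
    exact_mod_cast key2
  -- final algebra
  set Sf := ∑ σ : Fin T → Fin (k+1),
      (((Finset.univ.sup fun q : Fin (T + 1) × Fin (k+1) =>
        Real.toNNReal (B σ (q.1 : ℕ) q.2 j) : NNReal)) : ℝ) with hSf
  set Sg := ∑ σ : Fin T → Fin (k+1),
      (((Finset.univ.sup fun i : Fin (k+1) =>
        Real.toNNReal (B σ T i j) : NNReal)) : ℝ) with hSg
  have hkpos : (0:ℝ) < (k : ℕ) := by exact_mod_cast (by omega : 0 < k)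
  have hNpos : (0:ℝ) < ((k+1 : ℕ) : ℝ) := by positivity
  have hkT : (0:ℝ) < ((k : ℕ) : ℝ) ^ T := by positivity
  have hNT : (0:ℝ) < ((k+1 : ℕ) : ℝ) ^ T := by positivity
  have h1 : (1 - (((k+1 : ℕ)) : ℝ)⁻¹) = ((k : ℕ) : ℝ) / ((k+1 : ℕ) : ℝ) := by
    field_simp
    push_cast; ring
  have h2 : ((1 - (((k+1 : ℕ)) : ℝ)⁻¹) ^ T)⁻¹ = ((k+1 : ℕ) : ℝ) ^ T / ((k : ℕ) : ℝ) ^ T := by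
    rw [h1, div_pow, inv_div]
  rw [h2]
  have h3 : ((k+1 : ℕ) : ℝ) ^ T / ((k : ℕ) : ℝ) ^ T * (1 / ((k+1 : ℕ) : ℝ) ^ T * Sg)
      = Sg / ((k : ℕ) : ℝ) ^ T := by
    field_simp
  rw [h3, one_div, inv_mul_le_iff₀ hNT, ← mul_div_assoc, le_div_iff₀ hkT]
  calc Sf * ((k : ℕ) : ℝ) ^ T = ((k : ℕ) : ℝ) ^ T * Sf := by ring
    _ ≤ ((k+1 : ℕ) : ℝ) ^ T * Sg := key
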